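/- For every square complex matrix O there exists a unitary matrix K such that Oᵀ = K O K*, where Oᵀ is the transpose of O and K* is the entrywise complex conjugate of K. Explicitly, if O = X Σ Y is a singular value decomposition of O, one may take K = Y_{Oᵀ} X_O†, i.e., the product of the left-unitary of an SVD of Oᵀ with the adjoint of the left-unitary of an SVD of O sharing the same diagonal factor Σ. -/

import Mathlib

open Matrix

/-- The `n × m` "diagonal" matrix with `σ 0, σ 1, …` on the main diagonal. -/
def svdDiag (n m : ℕ) (σ : ℕ → ℝ) : Matrix (Fin n) (Fin m) ℂ :=
  Matrix.of fun i j => if (i : ℕ) = (j : ℕ) then (σ (i : ℕ) : ℂ) else 0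

/-- The Moore–Penrose pseudoinverse of `svdDiag n m σ`: diagonal with entries `σᵢ⁻¹`
where `σᵢ ≠ 0` and `0` where `σᵢ = 0` (note `(0 : ℝ)⁻¹ = 0`). -/
noncomputable def svdDiagPinv (n m : ℕ) (σ : ℕ → ℝ) : Matrix (Fin m) (Fin n) ℂ :=
  Matrix.of fun i j => if (i : ℕ) = (j : ℕ) then ((σ (i : ℕ))⁻¹ : ℂ) else 0

/-- `O = X Σ Y` is a singular value decomposition of `O` : `X`, `Y` unitary and `Σ` the
diagonal matrix of the singular values `σ 0 ≥ σ 1 ≥ … ≥ 0` in decreasing order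
(padded with zeros beyond `min n m`). -/
def IsSVD {n m : ℕ} (O : Matrix (Fin n) (Fin m) ℂ) (X : Matrix (Fin n) (Fin n) ℂ)
    (σ : ℕ → ℝ) (Y : Matrix (Fin m) (Fin m) ℂ) : Prop :=
  X ∈ Matrix.unitaryGroup (Fin n) ℂ ∧ Y ∈ Matrix.unitaryGroup (Fin m) ℂ ∧
  (∀ i, 0 ≤ σ i) ∧ Antitone σ ∧ (∀ i, min n m ≤ i → σ i = 0) ∧
  O = X * svdDiag n m σ * Y

open scoped ComplexOrder in
/-- Polar-type factorization: if `Bᴴ B` is the diagonal matrix with entries `dᵢ²`, then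
`B = X D` with `X` unitary and `D = diagonal d`. -/
theorem exists_unitary_mul_diagonal {n : ℕ} (B : Matrix (Fin n) (Fin n) ℂ) (d : Fin n → ℝ)
    (h : Bᴴ * B = Matrix.diagonal (fun i => ((d i : ℂ))^2)) :
    ∃ X ∈ Matrix.unitaryGroup (Fin n) ℂ,
      X * Matrix.diagonal (fun i => (d i : ℂ)) = B := by
  classical
  have key : ∀ i j : Fin n, (∑ k, (starRingEnd ℂ) (B k i) * B k j)
      = if i = j then ((d i : ℂ))^2 else 0 := by
    intro i j
    have := congrFun (congrFun h i) j
    simpa [Matrix.mul_apply, Matrix.conjTranspose_apply, Matrix.diagonal_apply] using this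
  -- columns with zero singular value vanish
  have hcol : ∀ j : Fin n, d j = 0 → ∀ i, B i j = 0 := by
    intro j hj i
    have h0 : (star (fun k => B k j)) ⬝ᵥ (fun k => B k j) = 0 := by
      have := key j j
      simpa [dotProduct, hj] using this
    have := dotProduct_star_self_eq_zero.mp h0
    exact congrFun this i
  set v : Fin n → EuclideanSpace ℂ (Fin n) :=
    fun j => WithLp.toLp 2 (fun i => ((d j : ℂ))⁻¹ * B i j) with hv_def
  set s : Set (Fin n) := {j | d j ≠ 0} with hs_def
  have card : Module.finrank ℂ (EuclideanSpace ℂ (Fin n)) = Fintype.card (Fin n) := by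
    simp
  have hv : Orthonormal ℂ (s.restrict v) := by
    rw [orthonormal_iff_ite]
    rintro ⟨i, hi⟩ ⟨j, hj⟩
    have hinner : (inner ℂ (v i) (v j) : ℂ)
        = ((d i : ℂ))⁻¹ * ((d j : ℂ))⁻¹ * ∑ k, (starRingEnd ℂ) (B k i) * B k j := by
      simp only [hv_def, PiLp.inner_apply, PiLp.toLp_apply, RCLike.inner_apply, _root_.map_mul, Finset.mul_sum]
      rw [Finset.sum_congr rfl]
      intro k _
      simp [Complex.conj_ofReal]
      ring
    show inner ℂ (v i) (v j) = _
    rw [hinner, key i j]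
    by_cases hij : i = j
    · subst hij
      simp only [if_pos rfl, Subtype.mk.injEq]
      have hdi : (d i : ℂ) ≠ 0 := by exact_mod_cast hi
      field_simp
      simp
    · have : (⟨i, hi⟩ : s) ≠ ⟨j, hj⟩ := by simpa [Subtype.mk.injEq] using hij
      simp [hij, this]
  obtain ⟨b, hb⟩ := hv.exists_orthonormalBasis_extension_of_card_eq card
  refine ⟨(EuclideanSpace.basisFun (Fin n) ℂ).toBasis.toMatrix b.toBasis,
    (EuclideanSpace.basisFun (Fin n) ℂ).toMatrix_orthonormalBasis_mem_unitary b, ?_⟩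
  ext i j
  have hX : (EuclideanSpace.basisFun (Fin n) ℂ).toBasis.toMatrix b.toBasis i j = b j i := rfl
  rw [Matrix.mul_diagonal, hX]
  by_cases hj : d j = 0
  · simp [hj, hcol j hj i]
  · have : b j = v j := hb j hj
    rw [this]
    have hdj : (d j : ℂ) ≠ 0 := by exact_mod_cast hj
    show ((d j : ℂ))⁻¹ * B i j * (d j : ℂ) = B i j
    field_simp

open scoped ComplexOrder in
/-- Every square complex matrix admits a singular value decomposition. -/
theorem exists_isSVD {n : ℕ} (O : Matrix (Fin n) (Fin n) ℂ) :
    ∃ X σ Y, IsSVD O X σ Y := by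
  classical
  have hA : (Oᴴ * O).PosSemidef := Matrix.posSemidef_conjTranspose_mul_self O
  set μ : Fin n → ℝ := hA.1.eigenvalues with hμ
  have hμ0 : ∀ i, 0 ≤ μ i := hA.eigenvalues_nonneg
  set e : Equiv.Perm (Fin n) := Tuple.sort (fun i => -μ i) with he
  have hmono : Monotone ((fun i => -μ i) ∘ e) := Tuple.monotone_sort _
  set d : Fin n → ℝ := fun i => Real.sqrt (μ (e i)) with hd
  have hd0 : ∀ i, 0 ≤ d i := fun i => Real.sqrt_nonneg _
  set σ : ℕ → ℝ := fun k => if h : k < n then d ⟨k, h⟩ else 0 with hσ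
  -- the permuted eigenvector unitary
  set U : Matrix (Fin n) (Fin n) ℂ := (hA.1.eigenvectorUnitary : Matrix (Fin n) (Fin n) ℂ) with hU
  have hUmem : U ∈ Matrix.unitaryGroup (Fin n) ℂ := hA.1.eigenvectorUnitary.2
  set U' : Matrix (Fin n) (Fin n) ℂ := U.submatrix id e with hU'
  have hU'mem : U' ∈ Matrix.unitaryGroup (Fin n) ℂ := by
    rw [Matrix.mem_unitaryGroup_iff']
    have : star U' = Uᴴ.submatrix (⇑e) id := by
      simp [hU', Matrix.star_eq_conjTranspose, Matrix.conjTranspose_submatrix]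
    rw [this]
    have : Uᴴ.submatrix (⇑e) id * U.submatrix id (⇑e)
        = (Uᴴ * U).submatrix (⇑e) (⇑e) := by
      have := Matrix.submatrix_mul_equiv Uᴴ U (⇑e) (Equiv.refl (Fin n)) (⇑e)
      simpa using this
    rw [this]
    have h1 : Uᴴ * U = 1 := Matrix.mem_unitaryGroup_iff'.mp hUmem
    rw [h1, Matrix.submatrix_one_equiv]
  -- spectral theorem, permuted
  have hspec : Oᴴ * O = U' * Matrix.diagonal (fun i => ((d i : ℂ))^2) * star U' := by
    have h1 : Oᴴ * O = U * Matrix.diagonal (fun i => (μ i : ℂ)) * star U := by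
      have := hA.1.spectral_theorem
      exact this
    have hdiag : Matrix.diagonal (fun i => ((d i : ℂ))^2)
        = (Matrix.diagonal (fun i => (μ i : ℂ))).submatrix (⇑e) (⇑e) := by
      rw [Matrix.submatrix_diagonal_equiv]
      have hfun : (fun i => ((d i : ℂ))^2) = (fun i => (μ i : ℂ)) ∘ ⇑e := by
        funext i
        have h2 : d i ^ 2 = μ (e i) := Real.sq_sqrt (hμ0 _)
        simp only [Function.comp_apply, ← h2]
        push_cast
        ring
      rw [hfun]
    have hstar : star U' = (star U).submatrix (⇑e) id := by
      simp [hU', Matrix.star_eq_conjTranspose, Matrix.conjTranspose_submatrix]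
    rw [hdiag, hstar, hU']
    have h2 : U.submatrix id (⇑e) * (Matrix.diagonal (fun i => (μ i : ℂ))).submatrix (⇑e) (⇑e)
        = (U * Matrix.diagonal (fun i => (μ i : ℂ))).submatrix id (⇑e) := by
      simpa using (Matrix.submatrix_mul_equiv U (Matrix.diagonal (fun i => (μ i : ℂ))) id e (⇑e))
    rw [h2]
    have h3 : (U * Matrix.diagonal (fun i => (μ i : ℂ))).submatrix id (⇑e)
        * (star U).submatrix (⇑e) id
        = (U * Matrix.diagonal (fun i => (μ i : ℂ)) * star U).submatrix id id := by
      simpa using (Matrix.submatrix_mul_equiv (U * Matrix.diagonal (fun i => (μ i : ℂ)))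
        (star U) id e id)
    rw [h3, Matrix.submatrix_id_id, h1]
  -- apply the polar-type factorization to B = O * U'
  have hB : (O * U')ᴴ * (O * U') = Matrix.diagonal (fun i => ((d i : ℂ))^2) := by
    rw [Matrix.conjTranspose_mul]
    calc U'ᴴ * Oᴴ * (O * U') = U'ᴴ * (Oᴴ * O) * U' := by
          simp only [Matrix.mul_assoc]
    _ = U'ᴴ * (U' * Matrix.diagonal (fun i => ((d i : ℂ))^2) * star U') * U' := by rw [hspec]
    _ = (star U' * U') * Matrix.diagonal (fun i => ((d i : ℂ))^2) * (star U' * U') := by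
        simp only [Matrix.star_eq_conjTranspose, Matrix.mul_assoc]
    _ = Matrix.diagonal (fun i => ((d i : ℂ))^2) := by
        rw [Matrix.mem_unitaryGroup_iff'.mp hU'mem]; simp
  obtain ⟨X, hXmem, hXeq⟩ := exists_unitary_mul_diagonal (O * U') d hB
  refine ⟨X, σ, star U', hXmem, Unitary.star_mem hU'mem, ?_, ?_, ?_, ?_⟩
  · intro k
    by_cases h : k < n
    · simp only [hσ, dif_pos h]; exact hd0 _
    · simp [hσ, dif_neg h]
  · apply antitone_nat_of_succ_le
    intro k
    by_cases h1 : k + 1 < n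
    · have hk : k < n := Nat.lt_of_succ_lt h1
      simp only [hσ, dif_pos h1, dif_pos hk]
      apply Real.sqrt_le_sqrt
      have hle : (⟨k, hk⟩ : Fin n) ≤ ⟨k+1, h1⟩ := by simp
      have := hmono hle
      simpa using this
    · by_cases hk : k < n
      · simp only [hσ, dif_neg h1, dif_pos hk]
        exact hd0 _
      · simp [hσ, dif_neg h1, dif_neg hk]
  · intro k hk
    simp only [min_self] at hk
    simp [hσ, Nat.not_lt.mpr hk]
  · have hsvd : svdDiag n n σ = Matrix.diagonal (fun i => (d i : ℂ)) := by
      ext i j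
      simp only [svdDiag, Matrix.of_apply, Matrix.diagonal_apply]
      by_cases hij : (i : ℕ) = (j : ℕ)
      · have : i = j := Fin.ext hij
        subst this
        simp [hσ, dif_pos i.isLt]
      · have : i ≠ j := fun h => hij (by rw [h])
        simp [hij, this]
    rw [hsvd]
    calc O = O * (U' * star U') := by
          rw [Matrix.mem_unitaryGroup_iff.mp hU'mem, mul_one]
    _ = (O * U') * star U' := (Matrix.mul_assoc O U' (star U')).symm
    _ = X * Matrix.diagonal (fun i => (d i : ℂ)) * star U' := by rw [hXeq]

/-- The diagonal factor of a square SVD is symmetric. -/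
theorem svdDiag_transpose {n : ℕ} (σ : ℕ → ℝ) : (svdDiag n n σ)ᵀ = svdDiag n n σ := by
  ext i j
  simp only [svdDiag, Matrix.transpose_apply, Matrix.of_apply]
  by_cases h : (i : ℕ) = (j : ℕ)
  · simp [h]
  · have h' : ¬ (j : ℕ) = (i : ℕ) := fun hh => h hh.symm
    simp [h, h']

/-- **Unitary implementation of transposition.** For every square complex matrix `O` there is a
unitary `K` with `Oᵀ = K O K*` (`K*` the entrywise conjugate). Explicitly, given any SVD
`O = X Σ Y`, one may take `K = Y_{Oᵀ} X†`, the product of the left-unitary `X'` of an SVD of `Oᵀ`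
sharing the same diagonal factor `Σ` with the adjoint of `X`. -/
theorem transposition_by_unitary {n : ℕ} (O : Matrix (Fin n) (Fin n) ℂ) :
    (∃ K ∈ Matrix.unitaryGroup (Fin n) ℂ, Oᵀ = K * O * K.map (starRingEnd ℂ)) ∧
    (∀ (X : Matrix (Fin n) (Fin n) ℂ) (σ : ℕ → ℝ) (Y : Matrix (Fin n) (Fin n) ℂ),
      IsSVD O X σ Y →
      ∃ (X' : Matrix (Fin n) (Fin n) ℂ) (Y' : Matrix (Fin n) (Fin n) ℂ),
        IsSVD Oᵀ X' σ Y' ∧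
        X' * Xᴴ ∈ Matrix.unitaryGroup (Fin n) ℂ ∧
        Oᵀ = (X' * Xᴴ) * O * (X' * Xᴴ).map (starRingEnd ℂ)) := by
  have main : ∀ (X : Matrix (Fin n) (Fin n) ℂ) (σ : ℕ → ℝ) (Y : Matrix (Fin n) (Fin n) ℂ),
      IsSVD O X σ Y →
      ∃ (X' : Matrix (Fin n) (Fin n) ℂ) (Y' : Matrix (Fin n) (Fin n) ℂ),
        IsSVD Oᵀ X' σ Y' ∧
        X' * Xᴴ ∈ Matrix.unitaryGroup (Fin n) ℂ ∧
        Oᵀ = (X' * Xᴴ) * O * (X' * Xᴴ).map (starRingEnd ℂ) := by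
    intro X σ Y hSVD
    obtain ⟨hX, hY, hσ0, hσanti, hσ0', hO⟩ := hSVD
    have hXt : Xᵀ ∈ Matrix.unitaryGroup (Fin n) ℂ := by
      rw [Matrix.mem_unitaryGroup_iff']
      have : star (Xᵀ) = (Xᴴ)ᵀ := rfl
      rw [this, ← Matrix.transpose_mul]
      have h1 : X * Xᴴ = 1 := Matrix.mem_unitaryGroup_iff.mp hX
      rw [h1, Matrix.transpose_one]
    have hYt : Yᵀ ∈ Matrix.unitaryGroup (Fin n) ℂ := by
      rw [Matrix.mem_unitaryGroup_iff']
      have : star (Yᵀ) = (Yᴴ)ᵀ := rfl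
      rw [this, ← Matrix.transpose_mul]
      have h1 : Y * Yᴴ = 1 := Matrix.mem_unitaryGroup_iff.mp hY
      rw [h1, Matrix.transpose_one]
    have hOt : Oᵀ = Yᵀ * svdDiag n n σ * Xᵀ := by
      rw [hO, Matrix.transpose_mul, Matrix.transpose_mul, svdDiag_transpose,
        Matrix.mul_assoc]
    refine ⟨Yᵀ, Xᵀ, ⟨hYt, hXt, hσ0, hσanti, hσ0', hOt⟩, ?_, ?_⟩
    · exact Submonoid.mul_mem _ hYt (Unitary.star_mem hX)
    · -- the key computation
      have hmap : (Yᵀ * Xᴴ).map (starRingEnd ℂ) = Yᴴ * Xᵀ := by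
        rw [Matrix.map_mul]
        have h1 : (Yᵀ).map (starRingEnd ℂ) = Yᴴ := by
          ext i j
          simp [Matrix.conjTranspose_apply, Matrix.map_apply]
        have h2 : (Xᴴ).map (starRingEnd ℂ) = Xᵀ := by
          ext i j
          simp [Matrix.conjTranspose_apply, Matrix.map_apply]
        rw [h1, h2]
      rw [hmap, hO]
      have hXX : Xᴴ * X = 1 := Matrix.mem_unitaryGroup_iff'.mp hX
      have hYY : Y * Yᴴ = 1 := Matrix.mem_unitaryGroup_iff.mp hY
      have hmid : Yᵀ * Xᴴ * (X * svdDiag n n σ * Y) * (Yᴴ * Xᵀ)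
          = Yᵀ * svdDiag n n σ * Xᵀ := by
        calc Yᵀ * Xᴴ * (X * svdDiag n n σ * Y) * (Yᴴ * Xᵀ)
            = Yᵀ * ((Xᴴ * X) * (svdDiag n n σ * ((Y * Yᴴ) * Xᵀ))) := by
              simp only [Matrix.mul_assoc]
        _ = Yᵀ * svdDiag n n σ * Xᵀ := by
              rw [hXX, hYY, Matrix.one_mul, Matrix.one_mul, Matrix.mul_assoc]
      rw [hmid, Matrix.transpose_mul, Matrix.transpose_mul, svdDiag_transpose,
        Matrix.mul_assoc]
  refine ⟨?_, main⟩
  obtain ⟨X, σ, Y, hSVD⟩ := exists_isSVD O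
  obtain ⟨X', Y', _, hK, hEq⟩ := main X σ Y hSVD
  exact ⟨X' * Xᴴ, hK, hEq⟩
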